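/- Let S be a metric space, let {h} ∪ {h⁽ⁿ⁾ : n ∈ ℕ} be Borel-measurable real-valued functions on S that are uniformly bounded, let {μ⁽ⁿ⁾} be Borel probability measures on S converging in total variation to a Borel probability measure μ, and suppose sup_{B Borel in S} |∫_B h⁽ⁿ⁾(s) μ⁽ⁿ⁾(ds) − ∫_B h(s) μ(ds)| → 0 as n → ∞. Then h⁽ⁿ⁾ converges to h in μ-measure (for every ε > 0, μ{s : |h⁽ⁿ⁾(s) − h(s)| ≥ ε} → 0), and consequently there exists a subsequence {h⁽ⁿᵏ⁾} converging to h μ-almost surely. -/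

import Mathlib

open MeasureTheory Filter Topology
open scoped ENNReal NNReal

open Set

lemma aux_nonneg_case {S : Type*} [MeasurableSpace S]
    (ν ρ : Measure S) [IsProbabilityMeasure ν] [IsProbabilityMeasure ρ]
    (g : S → ℝ) (gmeas : Measurable g) (C : ℝ) (hC : 0 ≤ C)
    (g_nn : ∀ s, 0 ≤ g s) (g_le : ∀ s, g s ≤ C)
    (B : Set S) (hB : MeasurableSet B)
    (D : ℝ) (hD : ∀ A : Set S, MeasurableSet A → |(ν A).toReal - (ρ A).toReal| ≤ D) :
    |(∫ s in B, g s ∂ν) - ∫ s in B, g s ∂ρ| ≤ C * D := by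
  have hint : ∀ (κ : Measure S), IsProbabilityMeasure κ → Integrable g (κ.restrict B) := by
    intro κ hκ
    refine Integrable.mono' (integrable_const C) gmeas.aestronglyMeasurable
      (Filter.Eventually.of_forall fun s => ?_)
    rw [Real.norm_eq_abs, abs_of_nonneg (g_nn s)]; exact g_le s
  -- layer cake
  have key : ∀ (κ : Measure S), IsProbabilityMeasure κ →
      ∫ s in B, g s ∂κ = ∫ t in Ioc (0:ℝ) C, (κ ({a | t < g a} ∩ B)).toReal := by
    intro κ hκ
    rw [Integrable.integral_eq_integral_meas_lt (hint κ hκ)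
      (Filter.Eventually.of_forall g_nn)]
    have hrw : ∀ t : ℝ, (κ.restrict B).real {a | t < g a} = (κ ({a | t < g a} ∩ B)).toReal := by
      intro t
      rw [Measure.real, Measure.restrict_apply (measurableSet_lt measurable_const gmeas)]
    simp_rw [hrw]
    rw [setIntegral_eq_of_subset_of_forall_diff_eq_zero measurableSet_Ioi Ioc_subset_Ioi_self]
    intro t ht
    have : {a | t < g a} = ∅ := by
      ext a; simp only [mem_setOf_eq, mem_empty_iff_false, iff_false, not_lt]
      exact (g_le a).trans (by
        rcases ht with ⟨ht1, ht2⟩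
        simp only [mem_Ioc, not_and, not_le] at ht2
        exact le_of_lt (ht2 ht1.out))
    simp [this]
  rw [key ν ‹_›, key ρ ‹_›]
  -- integrability of the layer functions
  have hlayer : ∀ (κ : Measure S), IsProbabilityMeasure κ →
      IntegrableOn (fun t => (κ ({a | t < g a} ∩ B)).toReal) (Ioc (0:ℝ) C) := by
    intro κ hκ
    have hmono : Antitone (fun t => (κ ({a | t < g a} ∩ B)).toReal) := by
      intro t t' htt'
      apply ENNReal.toReal_mono (measure_ne_top κ _)
      apply measure_mono
      intro a ha
      exact ⟨lt_of_le_of_lt htt' ha.1, ha.2⟩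
    refine Integrable.mono' (integrable_const (1:ℝ)) (hmono.measurable).aestronglyMeasurable
      (Filter.Eventually.of_forall fun t => ?_)
    rw [Real.norm_eq_abs, abs_of_nonneg ENNReal.toReal_nonneg]
    have : κ ({a | t < g a} ∩ B) ≤ 1 := le_trans (measure_mono (subset_univ _)) (by simp)
    calc (κ ({a | t < g a} ∩ B)).toReal ≤ (1:ℝ≥0∞).toReal :=
          ENNReal.toReal_mono (by simp) this
      _ = 1 := by simp
  rw [← integral_sub (hlayer ν ‹_›) (hlayer ρ ‹_›)]
  calc |∫ t in Ioc (0:ℝ) C, ((ν ({a | t < g a} ∩ B)).toReal - (ρ ({a | t < g a} ∩ B)).toReal)|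
      ≤ ∫ t in Ioc (0:ℝ) C, |(ν ({a | t < g a} ∩ B)).toReal - (ρ ({a | t < g a} ∩ B)).toReal| := by
        simpa [Real.norm_eq_abs] using
          norm_integral_le_integral_norm (μ := volume.restrict (Ioc (0:ℝ) C))
            (f := fun t => (ν ({a | t < g a} ∩ B)).toReal - (ρ ({a | t < g a} ∩ B)).toReal)
    _ ≤ ∫ _t in Ioc (0:ℝ) C, D := by
        apply setIntegral_mono_on ((hlayer ν ‹_›).sub (hlayer ρ ‹_›)).abs
          (integrableOn_const (by simp) (by simp))
          measurableSet_Ioc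
        intro t _
        exact hD _ ((measurableSet_lt measurable_const gmeas).inter hB)
    _ ≤ C * D := by
        rw [setIntegral_const]
        simp only [Real.volume_Ioc, smul_eq_mul, sub_zero]
        rw [Measure.real, Real.volume_Ioc, sub_zero, ENNReal.toReal_ofReal hC]

lemma aux_general_case {S : Type*} [MeasurableSpace S]
    (ν ρ : Measure S) [IsProbabilityMeasure ν] [IsProbabilityMeasure ρ]
    (f : S → ℝ) (fmeas : Measurable f) (M : ℝ) (hM : 0 ≤ M)
    (fbdd : ∀ s, |f s| ≤ M)
    (B : Set S) (hB : MeasurableSet B)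
    (D : ℝ) (hD : ∀ A : Set S, MeasurableSet A → |(ν A).toReal - (ρ A).toReal| ≤ D) :
    |(∫ s in B, f s ∂ν) - ∫ s in B, f s ∂ρ| ≤ 3 * M * D := by
  have hfint : ∀ (κ : Measure S), IsProbabilityMeasure κ → Integrable f (κ.restrict B) := by
    intro κ hκ
    exact Integrable.mono' (integrable_const M) fmeas.aestronglyMeasurable
      (Filter.Eventually.of_forall fun s => by rw [Real.norm_eq_abs]; exact fbdd s)
  have hsplit : ∀ (κ : Measure S), IsProbabilityMeasure κ →
      ∫ s in B, (f s + M) ∂κ = (∫ s in B, f s ∂κ) + (κ B).toReal * M := by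
    intro κ hκ
    rw [integral_add (hfint κ hκ) (integrable_const M), setIntegral_const, smul_eq_mul]; rfl
  have hg : |(∫ s in B, (f s + M) ∂ν) - ∫ s in B, (f s + M) ∂ρ| ≤ (2 * M) * D := by
    apply aux_nonneg_case ν ρ _ (fmeas.add measurable_const) (2 * M) (by linarith)
      (fun s => by have := abs_le.1 (fbdd s); simp only [Pi.add_apply]; linarith)
      (fun s => by have := abs_le.1 (fbdd s); simp only [Pi.add_apply]; linarith) B hB D hD
  rw [hsplit ν ‹_›, hsplit ρ ‹_›] at hg
  have hB' : |(ν B).toReal - (ρ B).toReal| ≤ D := hD B hB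
  have h1 : |(ν B).toReal * M - (ρ B).toReal * M| ≤ M * D := by
    rw [← sub_mul, abs_mul, abs_of_nonneg hM, mul_comm]
    exact mul_le_mul_of_nonneg_left hB' hM
  calc |(∫ s in B, f s ∂ν) - ∫ s in B, f s ∂ρ|
      = |((∫ s in B, f s ∂ν) + (ν B).toReal * M - ((∫ s in B, f s ∂ρ) + (ρ B).toReal * M))
          - ((ν B).toReal * M - (ρ B).toReal * M)| := by ring_nf
    _ ≤ |(∫ s in B, f s ∂ν) + (ν B).toReal * M - ((∫ s in B, f s ∂ρ) + (ρ B).toReal * M)|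
        + |(ν B).toReal * M - (ρ B).toReal * M| := abs_sub _ _
    _ ≤ (2 * M) * D + M * D := add_le_add hg h1
    _ = 3 * M * D := by ring

/-- **Theorem (convergence in measure from uniform convergence of set integrals).**
Let `S` be a metric space, `h, h⁽ⁿ⁾` uniformly bounded Borel functions on `S`, and let
probability measures `μ⁽ⁿ⁾` converge in total variation to `μ`. If
`sup_{B Borel} |∫_B h⁽ⁿ⁾ dμ⁽ⁿ⁾ − ∫_B h dμ| → 0`, then `h⁽ⁿ⁾ → h` in `μ`-measure, and
there is a subsequence converging to `h` `μ`-almost surely. -/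
theorem convergence_in_measure_of_setIntegrals {S : Type*}
    [MetricSpace S] [MeasurableSpace S] [BorelSpace S]
    (h : S → ℝ) (hs : ℕ → S → ℝ)
    (hmeas : Measurable h) (hsmeas : ∀ n, Measurable (hs n))
    (M : ℝ) (hbdd : ∀ s, |h s| ≤ M) (hsbdd : ∀ n s, |hs n s| ≤ M)
    (μs : ℕ → ProbabilityMeasure S) (μ : ProbabilityMeasure S)
    (hTV : Tendsto (fun n => ⨆ B : {B : Set S // MeasurableSet B},
        |((μs n) B.1 : ℝ) - (μ B.1 : ℝ)|) atTop (𝓝 0))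
    (hint : Tendsto (fun n => ⨆ B : {B : Set S // MeasurableSet B},
        |(∫ s in B.1, hs n s ∂(μs n : Measure S)) - ∫ s in B.1, h s ∂(μ : Measure S)|)
      atTop (𝓝 0)) :
    (∀ ε : ℝ, 0 < ε →
      Tendsto (fun n => (μ : Measure S) {s | ε ≤ |hs n s - h s|}) atTop (𝓝 0)) ∧
    ∃ φ : ℕ → ℕ, StrictMono φ ∧
      ∀ᵐ s ∂(μ : Measure S), Tendsto (fun k => hs (φ k) s) atTop (𝓝 (h s)) := by
  classical
  -- `S` is nonempty, so `0 ≤ M`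
  have hne : Nonempty S := by
    by_contra hc
    have h0 : (μ : Measure S) Set.univ = 1 := measure_univ
    rw [Set.univ_eq_empty_iff.2 (not_nonempty_iff.1 hc)] at h0
    simp at h0
  have hM : 0 ≤ M := le_trans (abs_nonneg _) (hbdd hne.some)
  set Dseq : ℕ → ℝ := fun n => ⨆ B : {B : Set S // MeasurableSet B},
      |((μs n) B.1 : ℝ) - (μ B.1 : ℝ)| with hDseq
  set Eseq : ℕ → ℝ := fun n => ⨆ B : {B : Set S // MeasurableSet B},
      |(∫ s in B.1, hs n s ∂(μs n : Measure S)) - ∫ s in B.1, h s ∂(μ : Measure S)| with hEseq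
  have coe_eq : ∀ (ν : ProbabilityMeasure S) (A : Set S),
      ((ν : Measure S) A).toReal = ((ν A : ℝ≥0) : ℝ) := by
    intro ν A
    rw [← ProbabilityMeasure.ennreal_coeFn_eq_coeFn_toMeasure, ENNReal.coe_toReal]
  have hDle : ∀ n (A : Set S), MeasurableSet A →
      |((μs n : Measure S) A).toReal - ((μ : Measure S) A).toReal| ≤ Dseq n := by
    intro n A hA
    have hbddD : BddAbove (Set.range fun B : {B : Set S // MeasurableSet B} =>
        |((μs n) B.1 : ℝ) - (μ B.1 : ℝ)|) := by
      refine ⟨2, ?_⟩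
      rintro x ⟨B, rfl⟩
      have h1 : ((μs n) B.1 : ℝ) ≤ 1 := by exact_mod_cast (μs n).apply_le_one B.1
      have h2 : ((μ B.1 : ℝ≥0) : ℝ) ≤ 1 := by exact_mod_cast μ.apply_le_one B.1
      have h3 : (0:ℝ) ≤ ((μs n) B.1 : ℝ) := ((μs n) B.1).coe_nonneg
      have h4 : (0:ℝ) ≤ ((μ B.1 : ℝ≥0) : ℝ) := (μ B.1).coe_nonneg
      rw [abs_sub_le_iff]; constructor <;> linarith
    have hle := le_ciSup hbddD (⟨A, hA⟩ : {B : Set S // MeasurableSet B})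
    rw [coe_eq, coe_eq]
    exact hle
  have hintf : ∀ (f : S → ℝ) (C : ℝ), Measurable f → (∀ s, |f s| ≤ C) →
      ∀ (κ : Measure S), IsProbabilityMeasure κ → ∀ B : Set S, IntegrableOn f B κ := by
    intro f C fmeas fbdd κ hκ B
    exact Integrable.mono' (integrable_const C) fmeas.aestronglyMeasurable
      (Filter.Eventually.of_forall fun s => by rw [Real.norm_eq_abs]; exact fbdd s)
  have hEle : ∀ n (B : Set S), MeasurableSet B →
      |(∫ s in B, hs n s ∂(μs n : Measure S)) - ∫ s in B, h s ∂(μ : Measure S)| ≤ Eseq n := by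
    intro n B hB
    have hnorm : ∀ (f : S → ℝ), Measurable f → (∀ s, |f s| ≤ M) →
        ∀ (ν : ProbabilityMeasure S) (B : Set S), |∫ s in B, f s ∂(ν : Measure S)| ≤ M := by
      intro f fmeas fbdd ν B
      have h1 : ‖∫ s in B, f s ∂(ν : Measure S)‖ ≤ M * (((ν : Measure S)) B).toReal :=
        norm_setIntegral_le_of_norm_le_const (measure_lt_top _ _)
          (fun x _ => by rw [Real.norm_eq_abs]; exact fbdd x)
      rw [Real.norm_eq_abs] at h1
      refine h1.trans ?_
      have h2 : (((ν : Measure S)) B).toReal ≤ 1 := by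
        have := ENNReal.toReal_mono (by simp) (prob_le_one (μ := (ν : Measure S)) (s := B))
        simpa using this
      calc M * (((ν : Measure S)) B).toReal ≤ M * 1 := mul_le_mul_of_nonneg_left h2 hM
        _ = M := mul_one M
    have hbddE : BddAbove (Set.range fun B : {B : Set S // MeasurableSet B} =>
        |(∫ s in B.1, hs n s ∂(μs n : Measure S)) - ∫ s in B.1, h s ∂(μ : Measure S)|) := by
      refine ⟨2 * M, ?_⟩
      rintro x ⟨B, rfl⟩
      have h1 := hnorm (hs n) (hsmeas n) (hsbdd n) (μs n) B.1
      have h2 := hnorm h hmeas hbdd μ B.1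
      have h1' := abs_le.1 h1
      have h2' := abs_le.1 h2
      rw [abs_sub_le_iff]; constructor <;> linarith [h1'.1, h1'.2, h2'.1, h2'.2]
    exact le_ciSup hbddE (⟨B, hB⟩ : {B : Set S // MeasurableSet B})
  -- the key quantitative bound
  have key : ∀ (ε : ℝ), 0 < ε → ∀ n,
      ((μ : Measure S) {s | ε ≤ |hs n s - h s|}).toReal
        ≤ 2 / ε * (3 * M * Dseq n + Eseq n) := by
    intro ε hε n
    set Bp : Set S := {s | ε ≤ hs n s - h s} with hBp
    set Bm : Set S := {s | ε ≤ h s - hs n s} with hBm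
    have hBpm : MeasurableSet Bp := measurableSet_le measurable_const ((hsmeas n).sub hmeas)
    have hBmm : MeasurableSet Bm := measurableSet_le measurable_const (hmeas.sub (hsmeas n))
    have haux : ∀ B : Set S, MeasurableSet B →
        |(∫ s in B, hs n s ∂(μ : Measure S)) - ∫ s in B, hs n s ∂(μs n : Measure S)|
          ≤ 3 * M * Dseq n := by
      intro B hB
      exact aux_general_case (μ : Measure S) (μs n : Measure S) (hs n) (hsmeas n) M hM
        (hsbdd n) B hB (Dseq n)
        (fun A hA => by rw [abs_sub_comm]; exact hDle n A hA)
    have hsub : ∀ (B : Set S), MeasurableSet B →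
        (∫ s in B, (hs n s - h s) ∂(μ : Measure S))
          = (∫ s in B, hs n s ∂(μ : Measure S)) - ∫ s in B, h s ∂(μ : Measure S) :=
      fun B _ => integral_sub (hintf (hs n) M (hsmeas n) (hsbdd n) _ inferInstance B)
        (hintf h M hmeas hbdd _ inferInstance B)
    -- bound for Bp
    have hp : ε * ((μ : Measure S) Bp).toReal ≤ 3 * M * Dseq n + Eseq n := by
      have h1 : ε * ((μ : Measure S) Bp).toReal
          ≤ ∫ s in Bp, (hs n s - h s) ∂(μ : Measure S) :=
        setIntegral_ge_of_const_le_real hBpm (measure_ne_top _ _) (fun x hx => hx)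
          (hintf (fun s => hs n s - h s) (2 * M) ((hsmeas n).sub hmeas)
            (fun s => by
              have h1 := abs_le.1 (hbdd s); have h2 := abs_le.1 (hsbdd n s)
              show |hs n s - h s| ≤ 2 * M
              rw [abs_le]; constructor <;> linarith) _ inferInstance Bp)
      rw [hsub Bp hBpm] at h1
      have h2 := haux Bp hBpm
      have h3 := hEle n Bp hBpm
      have h2' := (abs_le.1 h2).2
      have h3' := (abs_le.1 h3).2
      calc ε * ((μ : Measure S) Bp).toReal
          ≤ (∫ s in Bp, hs n s ∂(μ : Measure S)) - ∫ s in Bp, h s ∂(μ : Measure S) := h1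
        _ = ((∫ s in Bp, hs n s ∂(μ : Measure S)) - ∫ s in Bp, hs n s ∂(μs n : Measure S))
            + ((∫ s in Bp, hs n s ∂(μs n : Measure S)) - ∫ s in Bp, h s ∂(μ : Measure S)) := by
              ring
        _ ≤ 3 * M * Dseq n + Eseq n := add_le_add h2' h3'
    -- bound for Bm
    have hm : ε * ((μ : Measure S) Bm).toReal ≤ 3 * M * Dseq n + Eseq n := by
      have h1 : ε * ((μ : Measure S) Bm).toReal
          ≤ ∫ s in Bm, (h s - hs n s) ∂(μ : Measure S) :=
        setIntegral_ge_of_const_le_real hBmm (measure_ne_top _ _) (fun x hx => hx)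
          (hintf (fun s => h s - hs n s) (2 * M) (hmeas.sub (hsmeas n))
            (fun s => by
              have h1 := abs_le.1 (hbdd s); have h2 := abs_le.1 (hsbdd n s)
              show |h s - hs n s| ≤ 2 * M
              rw [abs_le]; constructor <;> linarith) _ inferInstance Bm)
      have heq : (∫ s in Bm, (h s - hs n s) ∂(μ : Measure S))
          = -((∫ s in Bm, (hs n s - h s) ∂(μ : Measure S))) := by
        rw [← integral_neg]; congr 1; ext s; ring
      rw [heq, hsub Bm hBmm] at h1
      have h2 := haux Bm hBmm
      have h3 := hEle n Bm hBmm
      linarith [(abs_le.1 h2).1, (abs_le.1 h3).1]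
    -- combine
    have hsubset : {s | ε ≤ |hs n s - h s|} ⊆ Bp ∪ Bm := by
      intro x hx
      rcases abs_cases (hs n x - h x) with ⟨he, _⟩ | ⟨he, _⟩
      · left; rw [hBp]; simp only [Set.mem_setOf_eq]; rw [← he]; exact hx
      · right; rw [hBm]; simp only [Set.mem_setOf_eq]
        have : |hs n x - h x| = h x - hs n x := by rw [he]; ring
        rw [← this]; exact hx
    have hmle : (μ : Measure S) {s | ε ≤ |hs n s - h s|}
        ≤ (μ : Measure S) Bp + (μ : Measure S) Bm :=
      (measure_mono hsubset).trans (measure_union_le _ _)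
    have htr : ((μ : Measure S) {s | ε ≤ |hs n s - h s|}).toReal
        ≤ ((μ : Measure S) Bp).toReal + ((μ : Measure S) Bm).toReal :=
      ENNReal.toReal_le_add hmle (measure_ne_top _ _) (measure_ne_top _ _)
    have hεinv : ((μ : Measure S) Bp).toReal ≤ (3 * M * Dseq n + Eseq n) / ε := by
      rw [le_div_iff₀ hε]; linarith
    have hεinv' : ((μ : Measure S) Bm).toReal ≤ (3 * M * Dseq n + Eseq n) / ε := by
      rw [le_div_iff₀ hε]; linarith
    calc ((μ : Measure S) {s | ε ≤ |hs n s - h s|}).toReal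
        ≤ (3 * M * Dseq n + Eseq n) / ε + (3 * M * Dseq n + Eseq n) / ε :=
          htr.trans (add_le_add hεinv hεinv')
      _ = 2 / ε * (3 * M * Dseq n + Eseq n) := by ring
  -- part 1
  have part1 : ∀ ε : ℝ, 0 < ε →
      Tendsto (fun n => (μ : Measure S) {s | ε ≤ |hs n s - h s|}) atTop (𝓝 0) := by
    intro ε hε
    have hb : Tendsto (fun n => 2 / ε * (3 * M * Dseq n + Eseq n)) atTop (𝓝 0) := by
      have := ((hTV.const_mul (3 * M)).add hint).const_mul (2 / ε)
      simpa using this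
    have hb' : Tendsto (fun n => ENNReal.ofReal (2 / ε * (3 * M * Dseq n + Eseq n)))
        atTop (𝓝 0) := by
      have := ENNReal.tendsto_ofReal hb
      simpa using this
    refine tendsto_of_tendsto_of_tendsto_of_le_of_le tendsto_const_nhds hb'
      (fun n => zero_le) (fun n => ?_)
    have heq : (μ : Measure S) {s | ε ≤ |hs n s - h s|}
        = ENNReal.ofReal (((μ : Measure S) {s | ε ≤ |hs n s - h s|}).toReal) :=
      (ENNReal.ofReal_toReal (measure_ne_top _ _)).symm
    rw [heq]
    exact ENNReal.ofReal_le_ofReal (key ε hε n)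
  refine ⟨part1, ?_⟩
  have hTIM : TendstoInMeasure (μ : Measure S) hs atTop h := by
    refine tendstoInMeasure_of_ne_top (fun ε hε hεt => ?_)
    have hset : ∀ n, {x | ε ≤ edist (hs n x) (h x)} = {s | ε.toReal ≤ |hs n s - h s|} := by
      intro n; ext x
      simp only [Set.mem_setOf_eq, edist_dist, Real.dist_eq]
      rw [ENNReal.le_ofReal_iff_toReal_le hεt (abs_nonneg _)]
    simp_rw [hset]
    exact part1 ε.toReal (ENNReal.toReal_pos hε.ne' hεt)
  exact hTIM.exists_seq_tendsto_ae
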